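/- For any alphabet A = {0,1,…,α-1} with α ≥ 3 and any n ≥ 2, there is no linear universal partial word for A^n containing exactly one ◊. -/

import Mathlib

/-- A partial-word symbol over the alphabet `Fin α`: `none` is the wildcard `◊`. -/
abbrev PSym (α : ℕ) := Option (Fin α)

/-- The word `v ∈ A^*` appears as a factor of the partial word `u` at 0-based position `i`:
each symbol of `u` in the window is either `◊` or equals the corresponding letter of `v`. -/
def MatchAt {α : ℕ} (u : List (PSym α)) (v : List (Fin α)) (i : ℕ) : Prop :=
  i + v.length ≤ u.length ∧
    ∀ j < v.length, u[i + j]? = some none ∨ u[i + j]? = (v[j]?).map some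

/-- `u` is a linear universal partial word (upword) for `A^n`, `A = Fin α`:
every word of length `n` over `A` appears exactly once as a factor. -/
def IsLinearUpword (α n : ℕ) (u : List (PSym α)) : Prop :=
  ∀ v : List (Fin α), v.length = n → ∃! i : ℕ, MatchAt u v i

/-- `v` appears as a cyclic factor of the partial word `u` at position `i`
(indices taken modulo `u.length`). -/
def CycMatchAt {α : ℕ} (u : List (PSym α)) (v : List (Fin α)) (i : ℕ) : Prop :=
  ∀ j < v.length,
    u[(i + j) % u.length]? = some none ∨ u[(i + j) % u.length]? = (v[j]?).map some

/-- `u` is a cyclic universal partial word for `A^n`: every word of length `n` over `A`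
appears exactly once as a cyclic factor. -/
def IsCyclicUpword (α n : ℕ) (u : List (PSym α)) : Prop :=
  ∀ v : List (Fin α), v.length = n → ∃! i : ℕ, i < u.length ∧ CycMatchAt u v i

lemma count_one_unique {A : Type*} [BEq A] [LawfulBEq A] :
    ∀ (l : List A) (a : A), l.count a = 1 →
      ∃ p, l[p]? = some a ∧ ∀ q : ℕ, l[q]? = some a → q = p := by
  intro l
  induction l with
  | nil => intro a h; simp at h
  | cons b t ih =>
    intro a h
    rw [List.count_cons] at h
    by_cases hba : b = a
    · subst hba
      simp at h
      refine ⟨0, by simp, ?_⟩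
      intro q hq
      cases q with
      | zero => rfl
      | succ q' =>
        exfalso
        simp only [List.getElem?_cons_succ] at hq
        have hm : b ∈ t := List.mem_of_getElem? hq
        have := List.count_pos_iff.mpr hm
        omega
    · have h' : t.count a = 1 := by simp [hba] at h; exact h
      obtain ⟨p, hp, hup⟩ := ih a h'
      refine ⟨p + 1, by simpa using hp, ?_⟩
      intro q hq
      cases q with
      | zero =>
        exfalso
        simp only [List.getElem?_cons_zero, Option.some.injEq] at hq
        exact hba hq
      | succ q' =>
        simp only [List.getElem?_cons_succ] at hq
        exact congrArg (· + 1) (hup q' hq)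

lemma key_ineq (α n : ℕ) (hα : 3 ≤ α) (hn : 2 ≤ n) : n * (α + 1) < α ^ n := by
  induction n with
  | zero => omega
  | succ m ih =>
    rcases Nat.lt_or_ge m 2 with hm | hm
    · interval_cases m
      · omega
      · simp [pow_succ, pow_one]
        nlinarith
    · have h1 := ih (by omega)
      have h2 : α + 1 ≤ α ^ m := by
        calc α + 1 ≤ α * α := by nlinarith
        _ ≤ α ^ m := by
              calc α * α = α ^ 2 := by ring
              _ ≤ α ^ m := Nat.pow_le_pow_right (by omega) hm
      have h3 : α ^ m + α ^ m ≤ α ^ (m + 1) := by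
        rw [pow_succ]
        nlinarith [Nat.one_le_two_pow (n := 0)]
      calc (m + 1) * (α + 1) = m * (α + 1) + (α + 1) := by ring
      _ < α ^ m + (α + 1) := by omega
      _ ≤ α ^ m + α ^ m := by omega
      _ ≤ α ^ (m+1) := h3

lemma counting_bound (α n : ℕ) (u : List (PSym α))
    (hu : IsLinearUpword α n u) (p : ℕ)
    (hq : ∀ q : ℕ, u[q]? = some (none : PSym α) → q = p) :
    α ^ n ≤ (u.length - n + 1) * (α + 1) := by
  classical
  have key : ∀ v : List.Vector (Fin α) n, ∃ i, MatchAt u v.toList i := fun v =>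
    (hu v.toList v.toList_length).exists
  choose f hf using key
  have hfl : ∀ v, f v < u.length - n + 1 := by
    intro v
    have := (hf v).1
    rw [List.Vector.toList_length] at this
    omega
  set L := u.length with hL
  let F : List.Vector (Fin α) n → Fin (L - n + 1) × Option (Fin α) :=
    fun v => (⟨f v, hfl v⟩, v.toList[p - f v]?)
  have hFinj : Function.Injective F := by
    intro v w hvw
    have h1 : f v = f w := by
      have := congrArg (fun x => (x.1 : ℕ)) hvw
      simpa [F] using this
    have h2 : v.toList[p - f v]? = w.toList[p - f w]? := congrArg Prod.snd hvw
    rw [h1] at h2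
    apply List.Vector.toList_injective
    apply List.ext_getElem?
    intro j
    by_cases hj : j < n
    · have hv := (hf v).2 j (by rw [List.Vector.toList_length]; exact hj)
      have hw := (hf w).2 j (by rw [List.Vector.toList_length]; exact hj)
      rw [h1] at hv
      have hdia : u[f w + j]? = some none → v.toList[j]? = w.toList[j]? := by
        intro hnone
        have hpj : f w + j = p := hq _ hnone
        have : p - f w = j := by omega
        rwa [this] at h2
      rcases hv with hv | hv
      · exact hdia hv
      · rcases hw with hw | hw
        · exact hdia hw
        · rw [hv] at hw
          exact Option.map_injective (Option.some_injective _) hw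
    · rw [List.getElem?_eq_none, List.getElem?_eq_none] <;>
        rw [List.Vector.toList_length] <;> omega
  calc α ^ n = Fintype.card (List.Vector (Fin α) n) := by
        rw [card_vector, Fintype.card_fin]
  _ ≤ Fintype.card (Fin (L - n + 1) × Option (Fin α)) :=
        Fintype.card_le_of_injective F hFinj
  _ = (L - n + 1) * (α + 1) := by
        rw [Fintype.card_prod, Fintype.card_fin, Fintype.card_option, Fintype.card_fin]

lemma matchAt_reverse {α : ℕ} {u : List (PSym α)} {v : List (Fin α)} {i : ℕ}
    (h : MatchAt u v i) : MatchAt u.reverse v.reverse (u.length - (i + v.length)) := by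
  obtain ⟨hb, hm⟩ := h
  constructor
  · rw [List.length_reverse, List.length_reverse]; omega
  · intro j hj
    rw [List.length_reverse] at hj
    have h1 : (u.length - (i + v.length)) + j < u.length := by omega
    rw [List.getElem?_reverse h1, List.getElem?_reverse (by omega : j < v.length)]
    have e1 : u.length - 1 - ((u.length - (i + v.length)) + j) = i + (v.length - 1 - j) := by
      omega
    rw [e1]
    exact hm (v.length - 1 - j) (by omega)

lemma upword_reverse {α n : ℕ} {u : List (PSym α)} (hu : IsLinearUpword α n u) :
    IsLinearUpword α n u.reverse := by
  intro v hv
  obtain ⟨i, hi, hun⟩ := hu v.reverse (by simp [hv])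
  have hib : i + n ≤ u.length := by
    have := hi.1; rwa [List.length_reverse, hv] at this
  refine ⟨u.length - (i + n), ?_, ?_⟩
  · have := matchAt_reverse hi
    rw [List.reverse_reverse, List.length_reverse, hv] at this
    exact this
  · intro j hj
    have hjb : j + n ≤ u.length := by
      have := hj.1; rwa [List.length_reverse, hv] at this
    have h2 := matchAt_reverse (u := u.reverse) hj
    rw [List.reverse_reverse, List.length_reverse, hv] at h2
    have := hun _ h2
    omega

lemma main_case (α n : ℕ) (hα : 3 ≤ α) (hn : 2 ≤ n) (u : List (PSym α))
    (hu : IsLinearUpword α n u) (p : ℕ)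
    (hd : u[p]? = some (none : PSym α))
    (hq : ∀ q : ℕ, u[q]? = some (none : PSym α) → q = p)
    (hpn : p + n ≤ u.length) : False := by
  classical
  set L := u.length with hL
  set z : List (Fin α) :=
    (List.range (n-1)).map
      (fun m => (u[p+1+m]?.getD (some ⟨0, by omega⟩)).getD ⟨0, by omega⟩) with hzdef
  have hzlen : z.length = n - 1 := by simp [hzdef]
  have hz : ∀ m, m < n - 1 → u[p+1+m]? = (z[m]?).map some := by
    intro m hm
    have hlt : p + 1 + m < L := by omega
    obtain ⟨o, ho⟩ : ∃ o, u[p+1+m]? = some o := ⟨u[p+1+m]'hlt, List.getElem?_eq_getElem hlt⟩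
    match o, ho with
    | none, ho => exact absurd (hq _ ho) (by omega)
    | some e, ho =>
      have hzm : z[m]? = some e := by
        simp only [hzdef, List.getElem?_map, List.getElem?_range hm, Option.map_some, ho,
          Option.getD_some]
      rw [ho, hzm]; rfl
  -- (a) every c :: z matches at p
  have ha : ∀ c : Fin α, MatchAt u (c :: z) p := by
    intro c
    refine ⟨by simp [hzlen]; omega, ?_⟩
    intro j hj
    match j with
    | 0 => left; simpa using hd
    | (m+1) =>
      right
      have hm : m < n - 1 := by
        simp only [List.length_cons, hzlen] at hj; omega
      have e : p + (m+1) = p + 1 + m := by omega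
      rw [e, hz m hm]
      simp
  -- (b) any match of c :: z is at p
  have hb : ∀ (c : Fin α) (i : ℕ), MatchAt u (c :: z) i → i = p := by
    intro c i hi
    obtain ⟨i0, h0, hun⟩ := hu (c :: z) (by simp [hzlen]; omega)
    rw [hun i hi, hun p (ha c)]
  -- (c) z matches only at 0 or p+1
  have hc : ∀ i : ℕ, MatchAt u z i → i = 0 ∨ i = p + 1 := by
    intro i hi
    by_contra hcon
    push_neg at hcon
    obtain ⟨h0, h1⟩ := hcon
    have hi1 : 1 ≤ i := Nat.one_le_iff_ne_zero.mpr h0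
    have hbnd := hi.1
    rw [hzlen] at hbnd
    have hlt : i - 1 < L := by omega
    obtain ⟨o, ho⟩ : ∃ o, u[i-1]? = some o := ⟨u[i-1]'hlt, List.getElem?_eq_getElem hlt⟩
    match o, ho with
    | none, ho => exact h1 (by have := hq _ ho; omega)
    | some c, ho =>
      have hmatch : MatchAt u (c :: z) (i-1) := by
        refine ⟨by simp [hzlen]; omega, ?_⟩
        intro j hj
        match j with
        | 0 => right; rw [Nat.add_zero, ho]; simp
        | (m+1) =>
          have hm : m < n - 1 := by
            simp only [List.length_cons, hzlen] at hj; omega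
          have e : i - 1 + (m+1) = i + m := by omega
          rw [e]
          rcases hi.2 m (by rw [hzlen]; exact hm) with h | h
          · left; exact h
          · right; rw [h]; simp
      have := hb c _ hmatch
      omega
  -- (d) for each letter c, a position i_c ∈ {0, p+1} where z matches and last cell fits c
  have hdl : ∀ c : Fin α, ∃ i : ℕ, MatchAt u z i ∧ (i = 0 ∨ i = p + 1) ∧
      (u[i + (n-1)]? = some none ∨ u[i + (n-1)]? = some (some c)) := by
    intro c
    obtain ⟨i, hi, _⟩ := hu (z ++ [c]) (by simp [hzlen]; omega)
    have hbnd := hi.1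
    simp only [List.length_append, List.length_cons, List.length_nil, hzlen] at hbnd
    have hzm : MatchAt u z i := by
      refine ⟨by rw [hzlen]; omega, ?_⟩
      intro j hj
      rw [hzlen] at hj
      rcases hi.2 j (by simp [hzlen]; omega) with h | h
      · left; exact h
      · right
        rw [h, List.getElem?_append]
        simp [hzlen, hj]
    refine ⟨i, hzm, hc i hzm, ?_⟩
    rcases hi.2 (n-1) (by simp [hzlen]) with h | h
    · left; exact h
    · right
      rw [h]
      have hcc : (z ++ [c])[n-1]? = some c := by
        have : (z ++ [c])[z.length]? = some c := List.getElem?_concat_length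
        rwa [hzlen] at this
      rw [hcc]; rfl
  -- pair lemma
  have pair : ∀ (c c' : Fin α) (i : ℕ), c ≠ c' →
      (u[i + (n-1)]? = some none ∨ u[i + (n-1)]? = some (some c)) →
      (u[i + (n-1)]? = some none ∨ u[i + (n-1)]? = some (some c')) →
      i + (n-1) = p := by
    intro c c' i hcc h h'
    rcases h with h | h
    · exact hq _ h
    rcases h' with h' | h'
    · exact hq _ h'
    rw [h] at h'
    simp only [Option.some.injEq] at h'
    exact absurd h' hcc
  -- (e) pigeonhole: p = n - 1 and z matches at 0
  have share : ∀ (c c' : Fin α) (i : ℕ), c ≠ c' → (i = 0 ∨ i = p + 1) →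
      (u[i + (n-1)]? = some none ∨ u[i + (n-1)]? = some (some c)) →
      (u[i + (n-1)]? = some none ∨ u[i + (n-1)]? = some (some c')) →
      p = n - 1 ∧ i = 0 := by
    intro c c' i hcc he h h'
    have hip := pair c c' i hcc h h'
    rcases he with rfl | rfl
    · exact ⟨by omega, rfl⟩
    · exact absurd hip (by omega)
  obtain ⟨hp1, hz0⟩ : p = n - 1 ∧ MatchAt u z 0 := by
    obtain ⟨i0, hm0, he0, hl0⟩ := hdl ⟨0, by omega⟩
    obtain ⟨i1, hm1, he1, hl1⟩ := hdl ⟨1, by omega⟩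
    obtain ⟨i2, hm2, he2, hl2⟩ := hdl ⟨2, by omega⟩
    have h01 : (⟨0, by omega⟩ : Fin α) ≠ ⟨1, by omega⟩ := by
      intro h; rw [Fin.mk.injEq] at h; omega
    have h02 : (⟨0, by omega⟩ : Fin α) ≠ ⟨2, by omega⟩ := by
      intro h; rw [Fin.mk.injEq] at h; omega
    have h12 : (⟨1, by omega⟩ : Fin α) ≠ ⟨2, by omega⟩ := by
      intro h; rw [Fin.mk.injEq] at h; omega
    rcases he0 with rfl | rfl <;> rcases he1 with rfl | rfl <;> rcases he2 with rfl | rfl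
    · exact ⟨(share _ _ 0 h01 (Or.inl rfl) hl0 hl1).1, hm0⟩
    · exact ⟨(share _ _ 0 h01 (Or.inl rfl) hl0 hl1).1, hm0⟩
    · exact ⟨(share _ _ 0 h02 (Or.inl rfl) hl0 hl2).1, hm0⟩
    · exact absurd (share _ _ (p+1) h12 (Or.inr rfl) hl1 hl2).2 (by omega)
    · exact ⟨(share _ _ 0 h12 (Or.inl rfl) hl1 hl2).1, hm1⟩
    · exact absurd (share _ _ (p+1) h02 (Or.inr rfl) hl0 hl2).2 (by omega)
    · exact absurd (share _ _ (p+1) h01 (Or.inr rfl) hl0 hl1).2 (by omega)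
    · exact absurd (share _ _ (p+1) h01 (Or.inr rfl) hl0 hl1).2 (by omega)
  -- (f) the prefix of u of length n-1 is literally z
  have hlit : ∀ m, m < n - 1 → u[m]? = (z[m]?).map some := by
    intro m hm
    rcases hz0.2 m (by rw [hzlen]; exact hm) with h | h
    · exfalso
      rw [Nat.zero_add] at h
      have := hq _ h
      omega
    · rwa [Nat.zero_add] at h
  by_cases h2n : 2 * n ≤ L
  · -- extract the letter e at position 2n-1 and double occurrence of z ++ [e]
    have hlt : 2 * n - 1 < L := by omega
    obtain ⟨o, ho⟩ : ∃ o, u[2*n-1]? = some o := ⟨u[2*n-1]'hlt, List.getElem?_eq_getElem hlt⟩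
    match o, ho with
    | none, ho => exact absurd (hq _ ho) (by omega)
    | some e, ho =>
      have hm0 : MatchAt u (z ++ [e]) 0 := by
        refine ⟨by simp [hzlen]; omega, ?_⟩
        intro j hj
        simp only [List.length_append, List.length_cons, List.length_nil, hzlen] at hj
        rcases Nat.lt_or_ge j (n-1) with hj' | hj'
        · right
          rw [Nat.zero_add, hlit j hj', List.getElem?_append]
          simp [hzlen, hj']
        · have hje : j = n - 1 := by omega
          left
          rw [Nat.zero_add, hje, ← hp1]
          exact hd
      have hm1 : MatchAt u (z ++ [e]) n := by
        refine ⟨by simp [hzlen]; omega, ?_⟩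
        intro j hj
        simp only [List.length_append, List.length_cons, List.length_nil, hzlen] at hj
        rcases Nat.lt_or_ge j (n-1) with hj' | hj'
        · right
          have e1 : n + j = p + 1 + j := by omega
          rw [e1, hz j hj', List.getElem?_append]
          simp [hzlen, hj']
        · have hje : j = n - 1 := by omega
          right
          have e1 : n + j = 2 * n - 1 := by omega
          rw [e1, ho, hje]
          have hcc : (z ++ [e])[n-1]? = some e := by
            have : (z ++ [e])[z.length]? = some e := List.getElem?_concat_length
            rwa [hzlen] at this
          rw [hcc]; rfl
      obtain ⟨i0, _, hun⟩ := hu (z ++ [e]) (by simp [hzlen]; omega)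
      have e0 := hun 0 hm0
      have e1 := hun n hm1
      omega
  · -- short word: counting contradiction
    have hLe : L = 2 * n - 1 := by omega
    have hcb := counting_bound α n u hu p hq
    rw [← hL, hLe] at hcb
    have : 2 * n - 1 - n + 1 = n := by omega
    rw [this] at hcb
    exact absurd hcb (Nat.not_le.mpr (key_ineq α n hα hn))

/-- For any alphabet `A = {0,…,α-1}` with `α ≥ 3` and any `n ≥ 2`,
there is no linear universal partial word for `A^n` containing exactly one `◊`. -/
theorem no_upword_single_diamond_nonbinary (α n : ℕ) (hα : 3 ≤ α) (hn : 2 ≤ n) :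
    ¬ ∃ u : List (PSym α), IsLinearUpword α n u ∧ u.count (none : PSym α) = 1 := by
  rintro ⟨u, hu, hcnt⟩
  obtain ⟨p, hd, hq⟩ := count_one_unique u (none : PSym α) hcnt
  have hpL : p < u.length := (List.getElem?_eq_some_iff.mp hd).1
  by_cases h1 : p + n ≤ u.length
  · exact main_case α n hα hn u hu p hd hq h1
  · by_cases h2 : n ≤ p + 1
    · -- work with the reversal
      have hu' := upword_reverse hu
      set L := u.length with hL
      have hd' : u.reverse[L - 1 - p]? = some (none : PSym α) := by
        rw [List.getElem?_reverse (by omega)]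
        have : L - 1 - (L - 1 - p) = p := by omega
        rw [this]; exact hd
      have hq' : ∀ q : ℕ, u.reverse[q]? = some (none : PSym α) → q = L - 1 - p := by
        intro q hqq
        have hqL : q < L := by
          have := (List.getElem?_eq_some_iff.mp hqq).1
          rwa [List.length_reverse] at this
        rw [List.getElem?_reverse hqL] at hqq
        have := hq _ hqq
        omega
      have hbnd : (L - 1 - p) + n ≤ u.reverse.length := by
        rw [List.length_reverse]; omega
      exact main_case α n hα hn u.reverse hu' (L - 1 - p) hd' hq' hbnd
    · -- diamond close to both ends: counting contradiction
      have hcb := counting_bound α n u hu p hq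
      have hle : u.length - n + 1 ≤ n := by omega
      have : (u.length - n + 1) * (α + 1) ≤ n * (α + 1) :=
        Nat.mul_le_mul_right _ hle
      have := key_ineq α n hα hn
      omega
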